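/- The Dirac bracket of two functions vanishing on the constraint surface descends to the quotient: if f = F^α θ_α vanishes as a combination of the constraints, then for every smooth g, {f, g}^D = θ_α ({F^α, g}^D), i.e. {f,g}^D again lies in the ideal generated by the constraints. -/

import Mathlib

/-- The Dirac bracket associated to a Poisson bracket `br`, second-class constraints `θ`
and the inverse `Δinv` of the Dirac matrix `Δ α β = br (θ α) (θ β)`:
`{f,g}^D = {f,g} - {f,θ_α} Δ^{αβ} {θ_β,g}`. -/
noncomputable def diracBracket {A : Type*} [CommRing A] {m : ℕ}
    (br : A → A → A) (θ : Fin m → A) (Δinv : Fin m → Fin m → A) (f g : A) : A :=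
  br f g - ∑ α, ∑ β, br f (θ α) * Δinv α β * br (θ β) g

/-- If `f = F^α θ_α` lies in the ideal generated by the constraints, then
`{f,g}^D = θ_α · {F^α, g}^D`, so the Dirac bracket descends to the quotient by this ideal. -/
theorem dirac_bracket_ideal {A : Type*} [CommRing A] {m : ℕ}
    (br : A → A → A)
    (hadd : ∀ f g h, br f (g + h) = br f g + br f h)
    (hanti : ∀ f g, br f g = - br g f)
    (hleibniz : ∀ f g h, br f (g * h) = br f g * h + g * br f h)
    (θ : Fin m → A) (Δinv : Fin m → Fin m → A)
    (hinv_left : ∀ α β, ∑ γ, Δinv α γ * br (θ γ) (θ β) = if α = β then 1 else 0)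
    (hinv_right : ∀ α β, ∑ γ, br (θ α) (θ γ) * Δinv γ β = if α = β then 1 else 0)
    (F : Fin m → A) (f : A) (hf : f = ∑ α, F α * θ α) :
    ∀ g, diracBracket br θ Δinv f g = ∑ α, θ α * diracBracket br θ Δinv (F α) g := by
  intro g
  -- left additivity
  have haddl : ∀ a b c : A, br (a + b) c = br a c + br b c := by
    intro a b c
    rw [hanti, hadd, hanti a c, hanti b c]; ring
  have hzero : ∀ c : A, br 0 c = 0 := by
    intro c
    have h := haddl 0 0 c
    simpa using h
  have hsum : ∀ (s : Finset (Fin m)) (h : Fin m → A) (c : A),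
      br (∑ i ∈ s, h i) c = ∑ i ∈ s, br (h i) c := by
    intro s h c
    induction s using Finset.induction with
    | empty => simpa using hzero c
    | insert _ _ hx ih => rw [Finset.sum_insert hx, Finset.sum_insert hx, haddl, ih]
  have hleibl : ∀ a b c : A, br (a * b) c = br a c * b + a * br b c := by
    intro a b c
    rw [hanti, hleibniz, hanti c a, hanti c b]; ring
  have hbrf : ∀ c : A, br f c = ∑ γ, (br (F γ) c * θ γ + F γ * br (θ γ) c) := by
    intro c
    rw [hf, hsum]
    exact Finset.sum_congr rfl fun γ _ => hleibl _ _ _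
  have hT2 : ∑ α, ∑ β, (∑ γ, F γ * br (θ γ) (θ α)) * Δinv α β * br (θ β) g
      = ∑ γ, F γ * br (θ γ) g := by
    rw [Finset.sum_comm]
    have : ∀ β, ∑ α, (∑ γ, F γ * br (θ γ) (θ α)) * Δinv α β * br (θ β) g
        = ∑ γ, F γ * (∑ α, br (θ γ) (θ α) * Δinv α β) * br (θ β) g := by
      intro β
      have step : ∀ α, (∑ γ, F γ * br (θ γ) (θ α)) * Δinv α β * br (θ β) g
          = ∑ γ, F γ * br (θ γ) (θ α) * Δinv α β * br (θ β) g := by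
        intro α; rw [Finset.sum_mul, Finset.sum_mul]
      rw [Finset.sum_congr rfl fun α _ => step α, Finset.sum_comm]
      refine Finset.sum_congr rfl fun γ _ => ?_
      rw [Finset.mul_sum, Finset.sum_mul]
      exact Finset.sum_congr rfl fun α _ => by ring
    rw [Finset.sum_congr rfl fun β _ => this β]
    refine Finset.sum_congr rfl fun β _ => ?_
    have : ∑ γ, F γ * (∑ α, br (θ γ) (θ α) * Δinv α β) * br (θ β) g
        = ∑ γ, F γ * (if γ = β then 1 else 0) * br (θ β) g := by
      refine Finset.sum_congr rfl fun γ _ => by rw [hinv_right]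
    rw [this]
    simp [Finset.sum_ite_eq]
  simp only [diracBracket]
  rw [hbrf g]
  have hexp : ∀ α β : Fin m, br f (θ α) * Δinv α β * br (θ β) g
      = (∑ γ, br (F γ) (θ α) * θ γ) * Δinv α β * br (θ β) g
        + (∑ γ, F γ * br (θ γ) (θ α)) * Δinv α β * br (θ β) g := by
    intro α β
    rw [hbrf (θ α), Finset.sum_add_distrib]
    ring
  simp only [hexp]
  simp only [Finset.sum_add_distrib, Finset.sum_sub_distrib, Finset.mul_sum, mul_sub]
  rw [hT2]
  have h1 : ∑ γ, (br (F γ) g * θ γ) = ∑ α, θ α * br (F α) g := by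
    exact Finset.sum_congr rfl fun γ _ => by ring
  have h2 : ∑ α, ∑ β, (∑ γ, br (F γ) (θ α) * θ γ) * Δinv α β * br (θ β) g
      = ∑ α, ∑ α', ∑ β, θ α * (br (F α) (θ α') * Δinv α' β * br (θ β) g) := by
    have step1 : ∀ α β : Fin m, (∑ γ, br (F γ) (θ α) * θ γ) * Δinv α β * br (θ β) g
        = ∑ γ, θ γ * (br (F γ) (θ α) * Δinv α β * br (θ β) g) := by
      intro α β
      rw [Finset.sum_mul, Finset.sum_mul]
      exact Finset.sum_congr rfl fun γ _ => by ring
    calc ∑ α, ∑ β, (∑ γ, br (F γ) (θ α) * θ γ) * Δinv α β * br (θ β) g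
        = ∑ α, ∑ β, ∑ γ, θ γ * (br (F γ) (θ α) * Δinv α β * br (θ β) g) :=
          Finset.sum_congr rfl fun α _ => Finset.sum_congr rfl fun β _ => step1 α β
      _ = ∑ α, ∑ γ, ∑ β, θ γ * (br (F γ) (θ α) * Δinv α β * br (θ β) g) :=
          Finset.sum_congr rfl fun α _ => Finset.sum_comm
      _ = ∑ γ, ∑ α, ∑ β, θ γ * (br (F γ) (θ α) * Δinv α β * br (θ β) g) :=
          Finset.sum_comm
  rw [h1, h2]
  ring
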